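/- Let T be a real symmetric tridiagonal matrix with simple spectrum and T = Qᵀ Λ' Q a diagonalization with Q orthogonal and Λ' diagonal. Then there exist a permutation matrix P and a sign diagonal E such that E P⁻¹ Q is LU-positive; consequently every T in the isospectral manifold lies in some chart domain U_Λ^π. -/

import Mathlib

open Matrix

/-- `L` is lower triangular with unit diagonal. -/
def IsUnipLower {n : ℕ} (L : Matrix (Fin n) (Fin n) ℝ) : Prop :=
  (∀ i j : Fin n, i < j → L i j = 0) ∧ ∀ i : Fin n, L i i = 1

/-- `U` is upper triangular with strictly positive diagonal. -/
def IsUpperTriPos {n : ℕ} (U : Matrix (Fin n) (Fin n) ℝ) : Prop :=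
  (∀ i j : Fin n, j < i → U i j = 0) ∧ ∀ i : Fin n, 0 < U i i

/-- The leading principal minor of order `k` of `M`. -/
def leadingMinor {n : ℕ} (M : Matrix (Fin n) (Fin n) ℝ) (k : ℕ) (h : k ≤ n) : ℝ :=
  (Matrix.of fun i j : Fin k => M (Fin.castLE h i) (Fin.castLE h j)).det

/-- `M` is LU-positive: all leading principal minors are strictly positive. -/
def LUPositive {n : ℕ} (M : Matrix (Fin n) (Fin n) ℝ) : Prop :=
  ∀ k (h : k ≤ n), 0 < leadingMinor M k h

/-- `Q` is orthogonal. -/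
def IsOrth {n : ℕ} (Q : Matrix (Fin n) (Fin n) ℝ) : Prop := Qᵀ * Q = 1

/-- `E` is a sign diagonal `diag(±1, …, ±1)`. -/
def IsSignDiag {n : ℕ} (E : Matrix (Fin n) (Fin n) ℝ) : Prop :=
  (∀ i j : Fin n, i ≠ j → E i j = 0) ∧ ∀ i : Fin n, E i i = 1 ∨ E i i = -1

/-- `M` is tridiagonal. -/
def IsTridiag {n : ℕ} (M : Matrix (Fin n) (Fin n) ℝ) : Prop :=
  ∀ i j : Fin n, ((i : ℕ) + 1 < (j : ℕ) ∨ (j : ℕ) + 1 < (i : ℕ)) → M i j = 0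

/-- The permutation matrix of `π`, with `(i, j)` entry `1` iff `i = π j`. -/
def permMat {n : ℕ} (π : Equiv.Perm (Fin n)) : Matrix (Fin n) (Fin n) ℝ :=
  Matrix.of fun i j => if i = π j then 1 else 0



lemma permMat_mul_apply {n : ℕ} (π : Equiv.Perm (Fin n)) (N : Matrix (Fin n) (Fin n) ℝ)
    (i j : Fin n) : (permMat π * N) i j = N (π⁻¹ i) j := by
  rw [Matrix.mul_apply, Finset.sum_eq_single (π⁻¹ i)]
  · simp [permMat]
  · intro m _ hm
    have : i ≠ π m := by
      intro h; exact hm (by simp [h])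
    simp [permMat, this]
  · simp

lemma transpose_permMat_mul_apply {n : ℕ} (π : Equiv.Perm (Fin n))
    (N : Matrix (Fin n) (Fin n) ℝ) (i j : Fin n) :
    ((permMat π)ᵀ * N) i j = N (π i) j := by
  rw [Matrix.mul_apply, Finset.sum_eq_single (π i)]
  · simp [permMat]
  · intro m _ hm
    simp [permMat, hm]
  · simp

lemma exists_good_perm (n : ℕ) (Q : Matrix (Fin n) (Fin n) ℝ) (hQ : IsUnit Q.det) :
    ∃ π : Equiv.Perm (Fin n), ∀ k (h : k ≤ n),
      (Matrix.of fun i j : Fin k => Q (π (Fin.castLE h i)) (Fin.castLE h j)).det ≠ 0 := by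
  suffices H : ∀ k, k ≤ n → ∃ π : Equiv.Perm (Fin n), ∀ m (hm : m ≤ n), m ≤ k →
      (Matrix.of fun i j : Fin m => Q (π (Fin.castLE hm i)) (Fin.castLE hm j)).det ≠ 0 by
    obtain ⟨π, hπ⟩ := H n le_rfl
    exact ⟨π, fun k h => hπ k h h⟩
  intro k
  induction k with
  | zero =>
    intro _
    refine ⟨1, fun m hm hm0 => ?_⟩
    interval_cases m
    simp [Matrix.det_fin_zero]
  | succ k ih =>
    intro hk1
    have hk : k ≤ n := le_trans (Nat.le_succ k) hk1
    have hkn : k < n := hk1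
    obtain ⟨π, hπ⟩ := ih hk
    -- the candidate (k+1)×(k+1) determinant obtained by appending row `r`
    set ρ : Fin n → Fin (k + 1) → Fin n :=
      fun r => Fin.snoc (fun i : Fin k => π (Fin.castLE hk i)) r with hρ
    set F : Fin n → ℝ :=
      fun r => (Matrix.of fun i j : Fin (k + 1) => Q (ρ r i) (Fin.castLE hk1 j)).det with hF
    -- cofactors along the last row (independent of r)
    set C : Fin (k + 1) → ℝ := fun j =>
      (Matrix.of fun i j' : Fin k =>
        Q (π (Fin.castLE hk i)) (Fin.castLE hk1 (j.succAbove j'))).det with hC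
    have laplace : ∀ r : Fin n,
        F r = ∑ j : Fin (k + 1), (-1) ^ (k + (j : ℕ)) * Q r (Fin.castLE hk1 j) * C j := by
      intro r
      show (Matrix.of fun i j : Fin (k + 1) => Q (ρ r i) (Fin.castLE hk1 j)).det = _
      rw [Matrix.det_succ_row _ (Fin.last k)]
      refine Finset.sum_congr rfl fun j _ => ?_
      congr 1
      · simp only [Matrix.of_apply, Fin.val_last]
        rw [hρ]
        simp
      · simp only [hC]
        congr 1
        ext i j'
        simp only [Matrix.submatrix_apply, Matrix.of_apply, Fin.succAbove_last]
        rw [hρ]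
        simp
    -- if every admissible pivot failed, Q would be singular
    have key : ∃ s : Fin n, k ≤ (s : ℕ) ∧ F (π s) ≠ 0 := by
      by_contra hcon
      push_neg at hcon
      have hFzero : ∀ r : Fin n, F r = 0 := by
        intro r
        rcases lt_or_ge ((π⁻¹ r : Fin n) : ℕ) k with hs | hs
        · -- repeated row
          rw [hF]
          apply Matrix.det_zero_of_row_eq
            (i := Fin.castSucc ⟨(π⁻¹ r : Fin n), hs⟩) (j := Fin.last k)
          · exact (Fin.castSucc_lt_last _).ne
          · funext j
            show Q (ρ r (Fin.castSucc _)) _ = Q (ρ r (Fin.last k)) _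
            rw [hρ]
            simp only [Fin.snoc_castSucc, Fin.snoc_last]
            congr 1
            have : Fin.castLE hk (⟨(π⁻¹ r : Fin n), hs⟩ : Fin k) = π⁻¹ r := by
              apply Fin.ext; simp
            rw [this]; simp
        · have := hcon (π⁻¹ r) hs
          simpa using this
      -- build a nonzero kernel vector
      set w : Fin n → ℝ := fun m =>
        if hm : (m : ℕ) < k + 1 then (-1) ^ (k + (m : ℕ)) * C ⟨m, hm⟩ else 0 with hw
      have hmv : Q.mulVec w = 0 := by
        funext r
        have hsum : ∑ m : Fin n, Q r m * w m
            = ∑ j : Fin (k + 1), Q r (Fin.castLE hk1 j) * w (Fin.castLE hk1 j) := by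
          have h1 : ∑ j : Fin (k + 1), Q r (Fin.castLE hk1 j) * w (Fin.castLE hk1 j)
              = ∑ m ∈ Finset.univ.map (Fin.castLEEmb hk1), Q r m * w m := by
            rw [Finset.sum_map]
            rfl
          rw [h1]
          symm
          apply Finset.sum_subset (Finset.subset_univ _)
          intro m _ hm
          have hnlt : ¬ (m : ℕ) < k + 1 := by
            intro hlt
            apply hm
            simp only [Finset.mem_map, Finset.mem_univ, true_and]
            exact ⟨⟨(m : ℕ), hlt⟩, by apply Fin.ext; simp⟩
          simp only [hw]
          rw [dif_neg hnlt, mul_zero]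
        have : Q.mulVec w r = F r := by
          rw [Matrix.mulVec, dotProduct, hsum, laplace r]
          refine Finset.sum_congr rfl fun j _ => ?_
          simp only [hw]
          have hj : ((Fin.castLE hk1 j : Fin n) : ℕ) < k + 1 := j.isLt
          rw [dif_pos hj]
          have : (⟨((Fin.castLE hk1 j : Fin n) : ℕ), hj⟩ : Fin (k + 1)) = j := by
            apply Fin.ext; simp
          rw [this, Fin.coe_castLE]
          ring
        rw [this, hFzero r]; rfl
      have hwz : w = 0 := by
        have hinj : Function.Injective Q.mulVec :=
          Matrix.mulVec_injective_iff_isUnit.mpr (Matrix.isUnit_iff_isUnit_det _ |>.mpr hQ)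
        apply hinj
        rw [hmv, Matrix.mulVec_zero]
      -- but the k-th cofactor is the previous leading minor, nonzero
      have hCl : C (Fin.last k) ≠ 0 := by
        simp only [hC]
        have : (Matrix.of fun i j' : Fin k =>
            Q (π (Fin.castLE hk i)) (Fin.castLE hk1 ((Fin.last k).succAbove j')))
            = (Matrix.of fun i j' : Fin k =>
            Q (π (Fin.castLE hk i)) (Fin.castLE hk j')) := by
          ext i j'
          show Q _ (Fin.castLE hk1 ((Fin.last k).succAbove j')) = Q _ (Fin.castLE hk j')
          congr 1
          apply Fin.ext
          simp [Fin.succAbove_last]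
        rw [this]
        exact hπ k hk le_rfl
      have : w (Fin.castLE hk1 (Fin.last k)) = 0 := by rw [hwz]; rfl
      simp only [hw] at this
      have hj : ((Fin.castLE hk1 (Fin.last k) : Fin n) : ℕ) < k + 1 := (Fin.last k).isLt
      rw [dif_pos hj] at this
      have he : (⟨((Fin.castLE hk1 (Fin.last k) : Fin n) : ℕ), hj⟩ : Fin (k + 1))
          = Fin.last k := by apply Fin.ext; simp
      rw [he] at this
      have hpow : ((-1 : ℝ)) ^ (k + ((Fin.last k : Fin (k+1)) : ℕ)) ≠ 0 := by
        apply pow_ne_zero; norm_num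
      exact hCl (by
        have := mul_eq_zero.mp this
        tauto)
    obtain ⟨s, hs, hFs⟩ := key
    set τ : Equiv.Perm (Fin n) := Equiv.swap (⟨k, hkn⟩ : Fin n) s with hτ
    refine ⟨π * τ, ?_⟩
    intro m hm hmk1
    have hfix : ∀ i : Fin m, (i : ℕ) < k → (π * τ) (Fin.castLE hm i) = π (Fin.castLE hm i) := by
      intro i hi
      have h1 : (Fin.castLE hm i : Fin n) ≠ ⟨k, hkn⟩ := by
        intro h; apply absurd (congrArg Fin.val h); simp [Nat.ne_of_lt hi]
      have h2 : (Fin.castLE hm i : Fin n) ≠ s := by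
        intro h
        have : ((Fin.castLE hm i : Fin n) : ℕ) < k := hi
        rw [h] at this; omega
      simp [hτ, Equiv.Perm.mul_apply, Equiv.swap_apply_of_ne_of_ne h1 h2]
    rcases Nat.lt_or_ge m (k + 1) with hmlt | hmge
    · -- m ≤ k : unchanged minors
      have : (Matrix.of fun i j : Fin m => Q ((π * τ) (Fin.castLE hm i)) (Fin.castLE hm j))
          = (Matrix.of fun i j : Fin m => Q (π (Fin.castLE hm i)) (Fin.castLE hm j)) := by
        ext i j
        simp only [Matrix.of_apply]
        rw [hfix i (lt_of_lt_of_le i.isLt (Nat.lt_succ_iff.mp hmlt))]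
      rw [this]
      exact hπ m hm (Nat.lt_succ_iff.mp hmlt)
    · -- m = k+1 : the matrix is M (π s)
      have hmeq : m = k + 1 := le_antisymm hmk1 hmge
      subst hmeq
      have : (Matrix.of fun i j : Fin (k+1) => Q ((π * τ) (Fin.castLE hm i)) (Fin.castLE hm j))
          = (Matrix.of fun i j : Fin (k+1) => Q (ρ (π s) i) (Fin.castLE hk1 j)) := by
        ext i j
        simp only [Matrix.of_apply]
        show Q ((π * τ) (Fin.castLE hm i)) (Fin.castLE hk1 j)
            = Q (ρ (π s) i) (Fin.castLE hk1 j)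
        congr 1
        rcases Nat.lt_or_ge (i : ℕ) k with hi | hi
        · rw [hfix i hi, hρ]
          have hi' : i = Fin.castSucc ⟨(i : ℕ), hi⟩ := by apply Fin.ext; simp
          rw [hi']
          simp only [Fin.snoc_castSucc]
          congr 1
        · have hieq : i = Fin.last k := by
            apply Fin.ext
            have := i.isLt
            simp; omega
          subst hieq
          have : (Fin.castLE hm (Fin.last k) : Fin n) = ⟨k, hkn⟩ := by apply Fin.ext; simp
          rw [this, hρ]
          simp [hτ, Equiv.Perm.mul_apply, Equiv.swap_apply_left]
      rw [this]
      exact hFs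


lemma leadingMinor_diag_mul {n : ℕ} (ε : Fin n → ℝ) (M : Matrix (Fin n) (Fin n) ℝ)
    (k : ℕ) (h : k ≤ n) :
    leadingMinor (Matrix.diagonal ε * M) k h
      = (∏ i : Fin k, ε (Fin.castLE h i)) * leadingMinor M k h := by
  unfold leadingMinor
  have : (Matrix.of fun i j : Fin k => (Matrix.diagonal ε * M) (Fin.castLE h i) (Fin.castLE h j))
      = Matrix.diagonal (fun i : Fin k => ε (Fin.castLE h i))
          * (Matrix.of fun i j : Fin k => M (Fin.castLE h i) (Fin.castLE h j)) := by
    ext i j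
    rw [Matrix.of_apply, Matrix.diagonal_mul, Matrix.diagonal_mul, Matrix.of_apply]
  rw [this, Matrix.det_mul, Matrix.det_diagonal]

lemma exists_sign_fix {n : ℕ} (M : Matrix (Fin n) (Fin n) ℝ)
    (hM : ∀ k (h : k ≤ n), leadingMinor M k h ≠ 0) :
    ∃ ε : Fin n → ℝ, (∀ i, ε i = 1 ∨ ε i = -1) ∧
      ∀ k (h : k ≤ n), 0 < leadingMinor (Matrix.diagonal ε * M) k h := by
  classical
  set δ : ℕ → ℝ := fun k => if h : k ≤ n then leadingMinor M k h else 1 with hδ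
  have hδne : ∀ k, δ k ≠ 0 := by
    intro k
    simp only [hδ]
    by_cases h : k ≤ n
    · rw [dif_pos h]; exact hM k h
    · rw [dif_neg h]; norm_num
  set ε : Fin n → ℝ := fun i => if 0 < δ i * δ (i + 1) then 1 else -1 with hε
  have hεpm : ∀ i, ε i = 1 ∨ ε i = -1 := by
    intro i; simp only [hε]; split_ifs <;> simp
  refine ⟨ε, hεpm, ?_⟩
  have main : ∀ k (h : k ≤ n), 0 < (∏ i : Fin k, ε (Fin.castLE h i)) * δ k := by
    intro k
    induction k with
    | zero =>
      intro h
      have : δ 0 = 1 := by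
        simp only [hδ]
        rw [dif_pos (Nat.zero_le n)]
        unfold leadingMinor
        exact Matrix.det_isEmpty
      simp [this]
    | succ k ihk =>
      intro h
      have hk : k ≤ n := le_trans (Nat.le_succ k) h
      have IH := ihk hk
      have hprod : (∏ i : Fin (k+1), ε (Fin.castLE h i))
          = (∏ i : Fin k, ε (Fin.castLE hk i)) * ε ⟨k, h⟩ := by
        rw [Fin.prod_univ_castSucc]
        congr 1
      rw [hprod]
      have hδk := hδne k
      have hδk1 := hδne (k + 1)
      have hεk : ε ⟨k, h⟩ = if 0 < δ k * δ (k + 1) then 1 else -1 := rfl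
      by_cases hp : 0 < δ k * δ (k + 1)
      · rw [hεk, if_pos hp]
        have h2 : 0 < δ k * δ k := mul_self_pos.mpr hδk
        nlinarith [mul_pos IH hp]
      · rw [hεk, if_neg hp]
        have hneg : δ k * δ (k + 1) < 0 :=
          lt_of_le_of_ne (not_lt.mp hp) (mul_ne_zero hδk hδk1)
        have h2 : 0 < δ k * δ k := mul_self_pos.mpr hδk
        nlinarith [mul_pos IH (neg_pos.mpr hneg)]
  intro k h
  rw [leadingMinor_diag_mul]
  have := main k h
  simp only [hδ] at this
  rw [dif_pos h] at this
  exact this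

/-- Every symmetric tridiagonal `T` with simple spectrum lies in some chart domain: given
a diagonalization `T = Qᵀ Λ' Q`, there are a permutation `π` and a sign diagonal `E` with
`E (P_π)⁻¹ Q` LU-positive, giving a `π`-normalized diagonalization of `T`. -/
theorem stmt8 (n : ℕ) (lam : Fin n → ℝ) (hlam : Function.Injective lam)
    (T Q : Matrix (Fin n) (Fin n) ℝ)
    (hsym : Tᵀ = T) (htri : IsTridiag T) (hQ : IsOrth Q)
    (hdiag : T = Qᵀ * Matrix.diagonal lam * Q) :
    ∃ (π : Equiv.Perm (Fin n)) (E : Matrix (Fin n) (Fin n) ℝ), IsSignDiag E ∧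
      LUPositive (E * (permMat π)ᵀ * Q) ∧
      T = (E * (permMat π)ᵀ * Q)ᵀ * Matrix.diagonal (fun i => lam (π i)) *
            (E * (permMat π)ᵀ * Q) := by
  classical
  have hdet : IsUnit Q.det := by
    have h1 : Q.det * Q.det = 1 := by
      have := congrArg Matrix.det hQ
      rwa [Matrix.det_mul, Matrix.det_transpose, Matrix.det_one] at this
    exact IsUnit.of_mul_eq_one _ h1
  obtain ⟨π, hπ⟩ := exists_good_perm n Q hdet
  set M : Matrix (Fin n) (Fin n) ℝ := (permMat π)ᵀ * Q with hM
  have hMminor : ∀ k (h : k ≤ n), leadingMinor M k h ≠ 0 := by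
    intro k h
    have he : (Matrix.of fun i j : Fin k => M (Fin.castLE h i) (Fin.castLE h j))
        = (Matrix.of fun i j : Fin k => Q (π (Fin.castLE h i)) (Fin.castLE h j)) := by
      ext i j
      simp only [Matrix.of_apply, hM]
      rw [transpose_permMat_mul_apply]
    unfold leadingMinor
    rw [he]
    exact hπ k h
  obtain ⟨ε, hεpm, hεpos⟩ := exists_sign_fix M hMminor
  have hsq : ∀ i, ε i * ε i = 1 := by
    intro i; rcases hεpm i with h | h <;> rw [h] <;> norm_num
  refine ⟨π, Matrix.diagonal ε, ?_, ?_, ?_⟩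
  · constructor
    · intro i j hij
      exact Matrix.diagonal_apply_ne ε hij
    · intro i
      rw [Matrix.diagonal_apply_eq]
      exact hεpm i
  · have hassoc : Matrix.diagonal ε * (permMat π)ᵀ * Q = Matrix.diagonal ε * M := by
      rw [hM, Matrix.mul_assoc]
    rw [hassoc]
    exact hεpos
  · have mid : permMat π * Matrix.diagonal ε * Matrix.diagonal (fun i => lam (π i))
        * (Matrix.diagonal ε * (permMat π)ᵀ) = Matrix.diagonal lam := by
      have : permMat π * (Matrix.diagonal ε * (Matrix.diagonal (fun i => lam (π i))
          * (Matrix.diagonal ε * (permMat π)ᵀ))) = Matrix.diagonal lam := by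
        ext i j
        rw [permMat_mul_apply]
        rw [Matrix.diagonal_mul, Matrix.diagonal_mul, Matrix.diagonal_mul]
        have hPt : (permMat π)ᵀ (π⁻¹ i) j = if i = j then 1 else 0 := by
          show permMat π j (π⁻¹ i) = _
          simp only [permMat, Matrix.of_apply, (show π (π⁻¹ i) = i from π.apply_symm_apply i)]
          by_cases h : i = j
          · simp [h]
          · simp [h, Ne.symm h]
        rw [hPt, (show π (π⁻¹ i) = i from π.apply_symm_apply i)]
        by_cases h : i = j
        · subst h
          rw [if_pos rfl, Matrix.diagonal_apply_eq]
          linear_combination (lam i) * hsq (π⁻¹ i)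
        · rw [if_neg h, Matrix.diagonal_apply_ne _ h]
          ring
      rw [← this]
      simp only [Matrix.mul_assoc]
    have expand : (Matrix.diagonal ε * (permMat π)ᵀ * Q)ᵀ
          * Matrix.diagonal (fun i => lam (π i))
          * (Matrix.diagonal ε * (permMat π)ᵀ * Q)
        = Qᵀ * (permMat π * Matrix.diagonal ε * Matrix.diagonal (fun i => lam (π i))
          * (Matrix.diagonal ε * (permMat π)ᵀ)) * Q := by
      simp only [Matrix.transpose_mul, Matrix.diagonal_transpose, Matrix.transpose_transpose,
        Matrix.mul_assoc]
    rw [expand, mid]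
    exact hdiag
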